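/- Let k ≥ 1, let G = (V,E) be a finite simple graph with n = |V| vertices and m = |E| edges, let c : S → [k] be a partial coloring of G, and let ℓ be a natural number. Set α = n(n−1)/2 − m + 1, and let K be the complete graph on V with edge weights w(uv) = α if uv ∈ E and w(uv) = 1 if uv ∉ E (u ≠ v). Then there exists an extension of c to a full k-coloring of G making at least ℓ edges of G happy if and only if there exists an extension of c to a full k-coloring of K for which the total weight of the happy edges of K is at least α·ℓ. -/

import Mathlib

open Finset
open scoped Classical

/-- The number of happy edges of a graph `G` under a full coloring `c`. -/
noncomputable def happyEdgeCount {V : Type*} [Fintype V] {k : ℕ}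
    (G : SimpleGraph V) (c : V → Fin k) : ℕ :=
  (G.edgeFinset.filter (fun e => ∀ x ∈ e, ∀ y ∈ e, c x = c y)).card

/-- The total weight of the happy edges of an edge-weighted graph `G` under a full coloring. -/
noncomputable def happyEdgeWeight {V : Type*} [Fintype V] {k : ℕ}
    (G : SimpleGraph V) (w : Sym2 V → ℕ) (c : V → Fin k) : ℕ :=
  ∑ e ∈ G.edgeFinset.filter (fun e => ∀ x ∈ e, ∀ y ∈ e, c x = c y), w e

lemma key_lemma {V : Type*} [Fintype V] {k : ℕ} (G : SimpleGraph V) (α : ℕ)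
    (hα : α = Fintype.card V * (Fintype.card V - 1) / 2 - G.edgeFinset.card + 1)
    (c' : V → Fin k) :
    α * happyEdgeCount G c' ≤
      happyEdgeWeight (⊤ : SimpleGraph V) (fun e => if e ∈ G.edgeSet then α else 1) c' ∧
    happyEdgeWeight (⊤ : SimpleGraph V) (fun e => if e ∈ G.edgeSet then α else 1) c' ≤
      α * happyEdgeCount G c' + (α - 1) := by
  classical
  have hsub : G.edgeFinset ⊆ (⊤ : SimpleGraph V).edgeFinset :=
    SimpleGraph.edgeFinset_subset_edgeFinset.mpr le_top
  have htop : ((⊤ : SimpleGraph V).edgeFinset).card =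
      Fintype.card V * (Fintype.card V - 1) / 2 := by
    rw [SimpleGraph.card_edgeFinset_top_eq_card_choose_two, Nat.choose_two_right]
  have hsplit : happyEdgeWeight (⊤ : SimpleGraph V) (fun e => if e ∈ G.edgeSet then α else 1) c' =
      ∑ e ∈ ((⊤ : SimpleGraph V).edgeFinset.filter
          (fun e => ∀ x ∈ e, ∀ y ∈ e, c' x = c' y)).filter (fun e => e ∈ G.edgeSet),
        (if e ∈ G.edgeSet then α else 1) +
      ∑ e ∈ ((⊤ : SimpleGraph V).edgeFinset.filter
          (fun e => ∀ x ∈ e, ∀ y ∈ e, c' x = c' y)).filter (fun e => ¬ e ∈ G.edgeSet),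
        (if e ∈ G.edgeSet then α else 1) := by
    rw [happyEdgeWeight, Finset.sum_filter_add_sum_filter_not]
    congr 1
    ext e
    simp
  have h1 : ((⊤ : SimpleGraph V).edgeFinset.filter
        (fun e => ∀ x ∈ e, ∀ y ∈ e, c' x = c' y)).filter (fun e => e ∈ G.edgeSet) =
      G.edgeFinset.filter (fun e => ∀ x ∈ e, ∀ y ∈ e, c' x = c' y) := by
    ext e
    simp only [Finset.mem_filter, SimpleGraph.mem_edgeFinset]
    constructor
    · rintro ⟨⟨_, hp⟩, he⟩; exact ⟨he, hp⟩
    · rintro ⟨he, hp⟩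
      exact ⟨⟨(SimpleGraph.edgeSet_subset_edgeSet.mpr le_top) he, hp⟩, he⟩
  have hsum1 : ∑ e ∈ ((⊤ : SimpleGraph V).edgeFinset.filter
        (fun e => ∀ x ∈ e, ∀ y ∈ e, c' x = c' y)).filter (fun e => e ∈ G.edgeSet),
        (if e ∈ G.edgeSet then α else 1) = α * happyEdgeCount G c' := by
    rw [h1, happyEdgeCount]
    rw [Finset.sum_congr rfl (fun e he => if_pos ((Finset.mem_filter.mp he).1 |>
      SimpleGraph.mem_edgeFinset.mp)), Finset.sum_const, smul_eq_mul, mul_comm]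
  have hsum2 : ∑ e ∈ ((⊤ : SimpleGraph V).edgeFinset.filter
        (fun e => ∀ x ∈ e, ∀ y ∈ e, c' x = c' y)).filter (fun e => ¬ e ∈ G.edgeSet),
        (if e ∈ G.edgeSet then α else 1) =
      (((⊤ : SimpleGraph V).edgeFinset.filter
        (fun e => ∀ x ∈ e, ∀ y ∈ e, c' x = c' y)).filter (fun e => ¬ e ∈ G.edgeSet)).card := by
    rw [Finset.sum_congr rfl (fun e he => if_neg (Finset.mem_filter.mp he).2),
      Finset.sum_const, smul_eq_mul, mul_one]
  have hcard : (((⊤ : SimpleGraph V).edgeFinset.filter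
      (fun e => ∀ x ∈ e, ∀ y ∈ e, c' x = c' y)).filter (fun e => ¬ e ∈ G.edgeSet)).card ≤
      α - 1 := by
    have hss : ((⊤ : SimpleGraph V).edgeFinset.filter
        (fun e => ∀ x ∈ e, ∀ y ∈ e, c' x = c' y)).filter (fun e => ¬ e ∈ G.edgeSet) ⊆
        (⊤ : SimpleGraph V).edgeFinset \ G.edgeFinset := by
      intro e he
      simp only [Finset.mem_filter, Finset.mem_sdiff, SimpleGraph.mem_edgeFinset] at *
      exact ⟨he.1.1, he.2⟩
    calc (((⊤ : SimpleGraph V).edgeFinset.filter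
          (fun e => ∀ x ∈ e, ∀ y ∈ e, c' x = c' y)).filter (fun e => ¬ e ∈ G.edgeSet)).card
        ≤ ((⊤ : SimpleGraph V).edgeFinset \ G.edgeFinset).card := Finset.card_le_card hss
      _ = ((⊤ : SimpleGraph V).edgeFinset).card - G.edgeFinset.card :=
          Finset.card_sdiff_of_subset hsub
      _ = α - 1 := by rw [htop, hα]; omega
  constructor
  · rw [hsplit, hsum1]; exact Nat.le_add_right _ _
  · rw [hsplit, hsum1, hsum2]; exact Nat.add_le_add_left hcard _

/-- Let `G` have `n` vertices and `m` edges, with partial coloring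
`c : S → [k]`, let `α = n(n−1)/2 − m + 1`, and weight the edges of the complete graph `K` on
`V` by `α` on edges of `G` and `1` on non-edges.  Then for every `ℓ`: `c` extends to a full
coloring of `G` with at least `ℓ` happy edges iff `c` extends to a full coloring of `K` whose
happy edges have total weight at least `α·ℓ`. -/
theorem stmt6 {V : Type*} [Fintype V] (k : ℕ) (hk : 1 ≤ k)
    (G : SimpleGraph V) (S : Finset V) (c : V → Fin k) (ℓ : ℕ) :
    (∃ c₁ : V → Fin k, (∀ x ∈ S, c₁ x = c x) ∧ ℓ ≤ happyEdgeCount G c₁) ↔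
    (∃ c₂ : V → Fin k, (∀ x ∈ S, c₂ x = c x) ∧
      (Fintype.card V * (Fintype.card V - 1) / 2 - G.edgeFinset.card + 1) * ℓ ≤
        happyEdgeWeight (⊤ : SimpleGraph V)
          (fun e => if e ∈ G.edgeSet
            then Fintype.card V * (Fintype.card V - 1) / 2 - G.edgeFinset.card + 1
            else 1)
          c₂) := by
  set α := Fintype.card V * (Fintype.card V - 1) / 2 - G.edgeFinset.card + 1 with hα
  constructor
  · rintro ⟨c₁, hext, hℓ⟩
    refine ⟨c₁, hext, ?_⟩
    calc α * ℓ ≤ α * happyEdgeCount G c₁ := Nat.mul_le_mul_left _ hℓ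
      _ ≤ _ := (key_lemma G α hα c₁).1
  · rintro ⟨c₂, hext, hw⟩
    refine ⟨c₂, hext, ?_⟩
    have h2 := (key_lemma G α hα c₂).2
    have : α * ℓ < α * (happyEdgeCount G c₂ + 1) := by
      have hα1 : 1 ≤ α := Nat.le_add_left 1 _
      calc α * ℓ ≤ α * happyEdgeCount G c₂ + (α - 1) := le_trans hw h2
        _ < α * happyEdgeCount G c₂ + α := by omega
        _ = α * (happyEdgeCount G c₂ + 1) := by ring
    have := Nat.lt_of_mul_lt_mul_left this
    omega
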